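/- Let p > 3 be prime and let z ∈ ℤ/p be nonzero. Then the pair of binary quadratic forms (z·a², z·b²) is equivalent to (a², b²). -/

import Mathlib

/-- A binary quadratic form over `ZMod p`, recorded by its coefficients:
`Q(a,b) = c20·a² + c11·a·b + c02·b²`. -/
structure BQF (p : ℕ) where
  c20 : ZMod p
  c11 : ZMod p
  c02 : ZMod p

/-- Evaluation of a binary quadratic form. -/
def BQF.eval {p : ℕ} (Q : BQF p) (a b : ZMod p) : ZMod p :=
  Q.c20 * a ^ 2 + Q.c11 * a * b + Q.c02 * b ^ 2

/-- Two pairs `(Q₁, Q₂)` and `(Q₁', Q₂')` of binary quadratic forms over `ZMod p`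
are equivalent if there are `R ∈ GL₂(ℤ/p)` and `S ∈ GL₂(ℤ/p)` with `det S = ±1`
such that `Qᵢ(R·(a,b)) = sᵢ₁·Q₁'(a,b) + sᵢ₂·Q₂'(a,b)` for all `(a,b)` and `i = 1,2`. -/
def PairEquiv {p : ℕ} (P P' : BQF p × BQF p) : Prop :=
  ∃ R S : Matrix (Fin 2) (Fin 2) (ZMod p),
    IsUnit R.det ∧ IsUnit S.det ∧ (S.det = 1 ∨ S.det = -1) ∧
    (∀ a b : ZMod p,
      P.1.eval (R 0 0 * a + R 0 1 * b) (R 1 0 * a + R 1 1 * b) =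
        S 0 0 * P'.1.eval a b + S 0 1 * P'.2.eval a b) ∧
    (∀ a b : ZMod p,
      P.2.eval (R 0 0 * a + R 0 1 * b) (R 1 0 * a + R 1 1 * b) =
        S 1 0 * P'.1.eval a b + S 1 1 * P'.2.eval a b)

/-- For nonzero `z ∈ ℤ/p`, the pair `(z·a², z·b²)` is equivalent to `(a², b²)`. -/
theorem pair_za2_zb2_equiv (p : ℕ) [Fact p.Prime] (hp : 3 < p)
    (z : ZMod p) (hz : z ≠ 0) :
    PairEquiv ((⟨z, 0, 0⟩ : BQF p), ⟨0, 0, z⟩) (⟨1, 0, 0⟩, ⟨0, 0, 1⟩) := by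
  have hzu : IsUnit z := isUnit_iff_ne_zero.mpr hz
  have hzi : z * z⁻¹ = 1 := mul_inv_cancel₀ hz
  refine ⟨!![1, 0; 0, z⁻¹], !![z, 0; 0, z⁻¹], ?_, ?_, ?_, ?_, ?_⟩
  · simp [Matrix.det_fin_two_of]
    exact hz
  · simp [Matrix.det_fin_two_of, hzi]
  · left; simp [Matrix.det_fin_two_of, hzi]
  · intro a b
    simp [BQF.eval]
  · intro a b
    simp [BQF.eval, mul_pow]
    field_simp
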